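/- arXiv:2602.00754 — 2 statements merged into one kernel-verified Lean document; each statement's English description precedes it below -/
import Mathlib

section
/- For every Boolean function f: {0,1}^n → {0,1}, there exists a restriction ρ with |ρ^{-1}(*)| = O(R(f)) such that R(f|_ρ) = Ω(R(f)^{1/3}), where R denotes bounded-error randomized query complexity. -/
open Finset

section Core
variable {ι : Type} [Fintype ι] [DecidableEq ι]

/-- Flip the bits of `x` indexed by the block `B`. -/
def flipSet (x : ι → Bool) (B : Finset ι) : ι → Bool :=
  fun i => if i ∈ B then !(x i) else x i

/-- Sensitivity of `f` at input `x`. -/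
def sensAt (f : (ι → Bool) → Bool) (x : ι → Bool) : ℕ :=
  (univ.filter fun i => f (flipSet x {i}) ≠ f x).card

/-- Sensitivity of `f`. -/
def sens (f : (ι → Bool) → Bool) : ℕ :=
  univ.sup fun x => sensAt f x

/-- Block sensitivity of `f` at `x`: the maximal number of pairwise disjoint
sensitive blocks at `x`. -/
noncomputable def bsAt (f : (ι → Bool) → Bool) (x : ι → Bool) : ℕ :=
  sSup {r | ∃ B : Fin r → Finset ι,
    (∀ j, f (flipSet x (B j)) ≠ f x) ∧
    ∀ j₁ j₂, j₁ ≠ j₂ → Disjoint (B j₁) (B j₂)}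

/-- Block sensitivity of `f`. -/
noncomputable def blockSens (f : (ι → Bool) → Bool) : ℕ :=
  univ.sup fun x => bsAt f x

/-- `S` is a certificate for `f` at `x`: every input agreeing with `x` on `S`
 has the same `f`-value as `x`. -/
def IsCert (f : (ι → Bool) → Bool) (x : ι → Bool) (S : Finset ι) : Prop :=
  ∀ y : ι → Bool, (∀ i ∈ S, y i = x i) → f y = f x

/-- Certificate complexity of `f` at `x`. -/
noncomputable def certAt (f : (ι → Bool) → Bool) (x : ι → Bool) : ℕ :=
  sInf {c | ∃ S : Finset ι, S.card = c ∧ IsCert f x S}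

/-- Certificate complexity of `f`. -/
noncomputable def certC (f : (ι → Bool) → Bool) : ℕ :=
  univ.sup fun x => certAt f x

/-- 0-certificate complexity of `f`. -/
noncomputable def cert0 (f : (ι → Bool) → Bool) : ℕ :=
  (univ.filter fun x => f x = false).sup fun x => certAt f x

/-- 1-certificate complexity of `f`. -/
noncomputable def cert1 (f : (ι → Bool) → Bool) : ℕ :=
  (univ.filter fun x => f x = true).sup fun x => certAt f x

/-- The restriction of `f` by the partial assignment `ρ` (a variable `i` with
`ρ i = none` is left unset; otherwise it is fixed to the given value). The
restricted function depends only on the unset variables. -/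
def restrictBF (f : (ι → Bool) → Bool) (ρ : ι → Option Bool) : (ι → Bool) → Bool :=
  fun x => f fun i => (ρ i).getD (x i)

/-- Number of unset variables of a partial assignment. -/
def unsetCard (ρ : ι → Option Bool) : ℕ :=
  (univ.filter fun i => ρ i = none).card

end Core

/-- Deterministic decision trees over variables indexed by `ι`. -/
inductive DTree (ι : Type) where
  | leaf : Bool → DTree ι
  | node : ι → DTree ι → DTree ι → DTree ι

/-- Evaluation of a decision tree on an input. -/
def DTree.eval {ι : Type} : DTree ι → (ι → Bool) → Bool
  | .leaf b, _ => b
  | .node i t0 t1, x => if x i then t1.eval x else t0.eval x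

/-- Depth (worst-case number of queries) of a decision tree. -/
def DTree.depth {ι : Type} : DTree ι → ℕ
  | .leaf _ => 0
  | .node _ t0 t1 => max t0.depth t1.depth + 1

/-- Deterministic query (decision tree) complexity. -/
noncomputable def Dquery {ι : Type} (f : (ι → Bool) → Bool) : ℕ :=
  sInf {d | ∃ T : DTree ι, T.depth ≤ d ∧ ∀ x, T.eval x = f x}

open scoped ENNReal

/-- Bounded-error randomized query complexity: least `d` such that some
probability distribution over decision trees of depth at most `d` computes `f`
with success probability at least `2/3` on every input. -/
noncomputable def Rquery {ι : Type} [Fintype ι] [DecidableEq ι]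
    (f : (ι → Bool) → Bool) : ℕ :=
  sInf {d | ∃ μ : PMF (DTree ι),
    (∀ T ∈ μ.support, T.depth ≤ d) ∧
    ∀ x, (2 / 3 : ℝ≥0∞) ≤ ∑' T : DTree ι, if T.eval x = f x then μ T else 0}

section Aux
set_option linter.unusedSectionVars false
set_option linter.unusedVariables false
open scoped ENNReal
variable {ι : Type} [Fintype ι] [DecidableEq ι]

lemma flipSet_empty (x : ι → Bool) : flipSet x ∅ = x := by
  funext i; simp [flipSet]

lemma flipSet_of_not_mem (x : ι → Bool) (B : Finset ι) {i : ι} (h : i ∉ B) :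
    flipSet x B i = x i := by simp [flipSet, h]

lemma flipSet_of_mem (x : ι → Bool) (B : Finset ι) {i : ι} (h : i ∈ B) :
    flipSet x B i = !(x i) := by simp [flipSet, h]

lemma block_nonempty {f : (ι → Bool) → Bool} {x : ι → Bool} {B : Finset ι}
    (h : f (flipSet x B) ≠ f x) : B.Nonempty := by
  rcases B.eq_empty_or_nonempty with h0 | h0
  · rw [h0, flipSet_empty] at h; exact absurd rfl h
  · exact h0

/-- A family of `r` pairwise disjoint sensitive blocks for `f` at `x`. -/
def SensFamily (f : (ι → Bool) → Bool) (x : ι → Bool) (r : ℕ)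
    (B : Fin r → Finset ι) : Prop :=
  (∀ j, f (flipSet x (B j)) ≠ f x) ∧ ∀ j₁ j₂, j₁ ≠ j₂ → Disjoint (B j₁) (B j₂)

lemma SensFamily.card_le {f : (ι → Bool) → Bool} {x : ι → Bool} {r : ℕ}
    {B : Fin r → Finset ι} (h : SensFamily f x r B) : r ≤ Fintype.card ι := by
  choose b hb using fun j => block_nonempty (h.1 j)
  have hinj : Function.Injective b := by
    intro j₁ j₂ hj
    by_contra hne
    exact Finset.disjoint_left.mp (h.2 j₁ j₂ hne) (hb j₁) (hj ▸ hb j₂)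
  simpa using Fintype.card_le_of_injective b hinj

lemma SensFamily.le_bsAt {f : (ι → Bool) → Bool} {x : ι → Bool} {r : ℕ}
    {B : Fin r → Finset ι} (h : SensFamily f x r B) : r ≤ bsAt f x :=
  le_csSup ⟨Fintype.card ι, fun _ hr => let ⟨B', h1, h2⟩ := hr; SensFamily.card_le ⟨h1, h2⟩⟩
    ⟨B, h.1, h.2⟩

lemma bsAt_exists (f : (ι → Bool) → Bool) (x : ι → Bool) :
    ∃ B : Fin (bsAt f x) → Finset ι, SensFamily f x (bsAt f x) B := by
  have hne : {r | ∃ B : Fin r → Finset ι,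
      (∀ j, f (flipSet x (B j)) ≠ f x) ∧
      ∀ j₁ j₂, j₁ ≠ j₂ → Disjoint (B j₁) (B j₂)}.Nonempty :=
    ⟨0, fun j => j.elim0, fun j => j.elim0, fun j => j.elim0⟩
  have hbdd : BddAbove {r | ∃ B : Fin r → Finset ι,
      (∀ j, f (flipSet x (B j)) ≠ f x) ∧
      ∀ j₁ j₂, j₁ ≠ j₂ → Disjoint (B j₁) (B j₂)} :=
    ⟨Fintype.card ι, fun _ hr => let ⟨B', h1, h2⟩ := hr; SensFamily.card_le ⟨h1, h2⟩⟩
  obtain ⟨B, h1, h2⟩ := Nat.sSup_mem hne hbdd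
  exact ⟨B, h1, h2⟩

lemma bsAt_le_blockSens (f : (ι → Bool) → Bool) (x : ι → Bool) :
    bsAt f x ≤ blockSens f :=
  Finset.le_sup (Finset.mem_univ x)

/-- The set of indices queried by a decision tree on a given input. -/
def DTree.queries {α : Type} [DecidableEq α] : DTree α → (α → Bool) → Finset α
  | .leaf _, _ => ∅
  | .node i t0 t1, x => insert i (if x i then t1.queries x else t0.queries x)

lemma DTree.queries_card_le_depth {α : Type} [DecidableEq α] (T : DTree α) (x : α → Bool) :
    (T.queries x).card ≤ T.depth := by
  induction T with
  | leaf b => simp [DTree.queries, DTree.depth]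
  | node i t0 t1 ih0 ih1 =>
    by_cases h : x i
    · simp only [DTree.queries, DTree.depth, if_pos h]
      refine (Finset.card_insert_le _ _).trans ?_
      omega
    · simp only [DTree.queries, DTree.depth, if_neg h]
      refine (Finset.card_insert_le _ _).trans ?_
      omega

lemma DTree.eval_flip {α : Type} [Fintype α] [DecidableEq α] (T : DTree α) (x : α → Bool)
    (B : Finset α) (h : Disjoint B (T.queries x)) : T.eval (flipSet x B) = T.eval x := by
  induction T with
  | leaf b => rfl
  | node i t0 t1 ih0 ih1 =>
    simp only [DTree.queries] at h
    have hi : i ∉ B := fun hiB =>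
      Finset.disjoint_left.mp h hiB (Finset.mem_insert_self _ _)
    have hx : flipSet x B i = x i := flipSet_of_not_mem x B hi
    have h2 : Disjoint B (if x i then t1.queries x else t0.queries x) :=
      h.mono_right (Finset.subset_insert _ _)
    by_cases hxi : x i
    · rw [if_pos hxi] at h2
      simp only [DTree.eval, hx, if_pos hxi]
      exact ih1 h2
    · rw [if_neg hxi] at h2
      simp only [DTree.eval, hx, if_neg hxi]
      exact ih0 h2

end Aux
section Aux2
set_option linter.unusedSectionVars false
open scoped ENNReal
variable {ι : Type} [Fintype ι] [DecidableEq ι]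

/-- The defining set of `Rquery`. -/
def RSet (f : (ι → Bool) → Bool) : Set ℕ :=
  {d | ∃ μ : PMF (DTree ι),
    (∀ T ∈ μ.support, T.depth ≤ d) ∧
    ∀ x, (2 / 3 : ℝ≥0∞) ≤ ∑' T : DTree ι, if T.eval x = f x then μ T else 0}

lemma Rquery_eq_sInf (f : (ι → Bool) → Bool) : Rquery f = sInf (RSet f) := rfl

/-- Nisan's argument: `r` disjoint sensitive blocks force `r ≤ 3 d` for any
randomized algorithm of depth `d`. -/
lemma SensFamily.le_three_mul_of_mem {f : (ι → Bool) → Bool} {x : ι → Bool} {r : ℕ}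
    {B : Fin r → Finset ι} (hB : SensFamily f x r B) {d : ℕ} (hd : d ∈ RSet f) :
    r ≤ 3 * d := by
  obtain ⟨μ, hdepth, hsucc⟩ := hd
  set q : Fin r → ℝ≥0∞ := fun j =>
    ∑' T : DTree ι, if ¬ Disjoint (B j) (T.queries x) then μ T else 0 with hq
  have key : ∀ j, (1/3 : ℝ≥0∞) ≤ q j := by
    intro j
    have hA := hsucc x
    have hB2 := hsucc (flipSet x (B j))
    have hsub : (∑' T : DTree ι, if T.eval x = f x then μ T else 0)
        ≤ (∑' T : DTree ι,
            if ¬ (T.eval (flipSet x (B j)) = f (flipSet x (B j))) then μ T else 0)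
          + q j := by
      rw [hq, ← ENNReal.tsum_add]
      refine ENNReal.tsum_le_tsum fun T => ?_
      by_cases hcor : T.eval x = f x
      · by_cases hdis : Disjoint (B j) (T.queries x)
        · have heq : T.eval (flipSet x (B j)) = T.eval x := DTree.eval_flip T x (B j) hdis
          have herr : ¬ (T.eval (flipSet x (B j)) = f (flipSet x (B j))) :=
            fun hc => hB.1 j (by rw [← hc, heq, hcor])
          rw [if_pos hcor, if_pos herr, if_neg (not_not_intro hdis)]
          exact le_self_add
        · rw [if_pos hcor, if_pos hdis]
          exact le_add_self
      · rw [if_neg hcor]; exact zero_le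
    have hcompl : (∑' T : DTree ι,
            if ¬ (T.eval (flipSet x (B j)) = f (flipSet x (B j))) then μ T else 0)
        + (∑' T : DTree ι,
            if T.eval (flipSet x (B j)) = f (flipSet x (B j)) then μ T else 0) = 1 := by
      rw [← ENNReal.tsum_add]
      have : ∀ T : DTree ι,
          (if ¬ (T.eval (flipSet x (B j)) = f (flipSet x (B j))) then μ T else 0)
          + (if T.eval (flipSet x (B j)) = f (flipSet x (B j)) then μ T else 0) = μ T := by
        intro T
        by_cases hc : T.eval (flipSet x (B j)) = f (flipSet x (B j)) <;> simp [hc]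
      rw [tsum_congr this, μ.tsum_coe]
    have hchain : (2/3 : ℝ≥0∞) + 2/3 ≤ 1 + q j := by
      calc (2/3 : ℝ≥0∞) + 2/3
          ≤ (∑' T : DTree ι, if T.eval x = f x then μ T else 0)
            + (∑' T : DTree ι,
                if T.eval (flipSet x (B j)) = f (flipSet x (B j)) then μ T else 0) :=
            add_le_add hA hB2
        _ ≤ ((∑' T : DTree ι,
                if ¬ (T.eval (flipSet x (B j)) = f (flipSet x (B j))) then μ T else 0)
              + q j)
            + (∑' T : DTree ι,
                if T.eval (flipSet x (B j)) = f (flipSet x (B j)) then μ T else 0) :=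
            add_le_add_left hsub _
        _ = 1 + q j := by rw [add_right_comm, hcompl]
    have h43 : (2/3 : ℝ≥0∞) + 2/3 = 1 + 1/3 := by
      rw [ENNReal.div_add_div_same]
      rw [show (2+2 : ℝ≥0∞) = 4 by norm_num]
      nth_rewrite 1 [show (1 : ℝ≥0∞) = 3/3 by rw [ENNReal.div_self] <;> norm_num]
      rw [ENNReal.div_add_div_same]
      norm_num
    rw [h43] at hchain
    exact (ENNReal.add_le_add_iff_left (by norm_num)).mp hchain
  have hsum : (r : ℝ≥0∞) * (1/3) ≤ ∑ j : Fin r, q j := by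
    calc (r : ℝ≥0∞) * (1/3) = ∑ _j : Fin r, (1/3 : ℝ≥0∞) := by
          rw [Finset.sum_const, Finset.card_univ, Fintype.card_fin, nsmul_eq_mul]
      _ ≤ ∑ j : Fin r, q j := Finset.sum_le_sum fun j _ => key j
  have hswap : ∑ j : Fin r, q j
      = ∑' T : DTree ι, ∑ j : Fin r, (if ¬ Disjoint (B j) (T.queries x) then μ T else 0) := by
    rw [hq, ← Summable.tsum_finsetSum]
    intro j _
    exact ENNReal.summable
  have hinner : ∀ T : DTree ι,
      (∑ j : Fin r, if ¬ Disjoint (B j) (T.queries x) then μ T else 0) ≤ (d : ℝ≥0∞) * μ T := by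
    intro T
    have hcount : (∑ j : Fin r, if ¬ Disjoint (B j) (T.queries x) then μ T else 0)
        = ((Finset.univ.filter fun j => ¬ Disjoint (B j) (T.queries x)).card : ℝ≥0∞) * μ T := by
      rw [Finset.sum_ite, Finset.sum_const, Finset.sum_const_zero, add_zero, nsmul_eq_mul]
    rw [hcount]
    by_cases hT : μ T = 0
    · rw [hT, mul_zero, mul_zero]
    · have hTsup : T ∈ μ.support := by simpa [PMF.mem_support_iff] using hT
      have hd' : T.depth ≤ d := hdepth T hTsup
      have hcard : (Finset.univ.filter fun j => ¬ Disjoint (B j) (T.queries x)).card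
          ≤ (T.queries x).card := by
        have hwit : ∀ j : Fin r, ∃ i,
            (¬ Disjoint (B j) (T.queries x)) → (i ∈ B j ∧ i ∈ T.queries x) := by
          intro j
          by_cases h : Disjoint (B j) (T.queries x)
          · exact ⟨(block_nonempty (hB.1 j)).choose, fun hc => absurd h hc⟩
          · obtain ⟨i, hi1, hi2⟩ := Finset.not_disjoint_iff.mp h
            exact ⟨i, fun _ => ⟨hi1, hi2⟩⟩
        choose w hw using hwit
        have hmem : ∀ j ∈ Finset.univ.filter fun j => ¬ Disjoint (B j) (T.queries x),
            w j ∈ T.queries x := fun j hj => (hw j (Finset.mem_filter.mp hj).2).2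
        refine Finset.card_le_card_of_injOn w hmem ?_
        intro j₁ hj₁ j₂ hj₂ hww
        by_contra hne
        exact Finset.disjoint_left.mp (hB.2 j₁ j₂ hne)
          (hw j₁ (Finset.mem_filter.mp hj₁).2).1 (hww ▸ (hw j₂ (Finset.mem_filter.mp hj₂).2).1)
      have : (Finset.univ.filter fun j => ¬ Disjoint (B j) (T.queries x)).card ≤ d :=
        hcard.trans ((T.queries_card_le_depth x).trans hd')
      exact mul_le_mul_left (by exact_mod_cast this) _
  have hfinal : (r : ℝ≥0∞) * (1/3) ≤ (d : ℝ≥0∞) := by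
    calc (r : ℝ≥0∞) * (1/3) ≤ ∑ j : Fin r, q j := hsum
      _ = ∑' T : DTree ι, ∑ j : Fin r, (if ¬ Disjoint (B j) (T.queries x) then μ T else 0) :=
          hswap
      _ ≤ ∑' T : DTree ι, (d : ℝ≥0∞) * μ T := ENNReal.tsum_le_tsum hinner
      _ = (d : ℝ≥0∞) := by rw [ENNReal.tsum_mul_left, μ.tsum_coe, mul_one]
  have h3 : (r : ℝ≥0∞) ≤ (d : ℝ≥0∞) * 3 := by
    have := mul_le_mul_left hfinal 3
    rwa [mul_assoc, show (1/3 : ℝ≥0∞) * 3 = 1 by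
      rw [one_div, ENNReal.inv_mul_cancel] <;> norm_num, mul_one] at this
  have : r ≤ d * 3 := by exact_mod_cast h3
  omega

end Aux2
section Aux3
set_option linter.unusedSectionVars false
open scoped ENNReal
variable {ι : Type} [Fintype ι] [DecidableEq ι]

lemma mem_RSet_of_tree {f : (ι → Bool) → Bool} {T : DTree ι} (hT : ∀ x, T.eval x = f x)
    {d : ℕ} (hd : T.depth ≤ d) : d ∈ RSet f := by
  refine ⟨PMF.pure T, ?_, ?_⟩
  · intro T' hT'
    rw [PMF.support_pure, Set.mem_singleton_iff] at hT'
    subst hT'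
    exact hd
  · intro x
    have h1 : (∑' T' : DTree ι, if T'.eval x = f x then (PMF.pure T) T' else 0) = 1 := by
      rw [tsum_eq_single T (fun T' hne => by simp [PMF.pure_apply, hne])]
      simp [PMF.pure_apply, hT x]
    rw [h1]
    exact ENNReal.div_le_of_le_mul (by norm_num)

lemma Rquery_le_depth {f : (ι → Bool) → Bool} {T : DTree ι} (hT : ∀ x, T.eval x = f x) :
    Rquery f ≤ T.depth :=
  Nat.sInf_le (mem_RSet_of_tree hT le_rfl)

def bigNode {α : Type} [DecidableEq α] :
    List α → (α → Option Bool) → ((α → Option Bool) → DTree α) → DTree α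
  | [], ρ, F => F ρ
  | i :: l, ρ, F => .node i (bigNode l (Function.update ρ i (some false)) F)
      (bigNode l (Function.update ρ i (some true)) F)

lemma bigNode_depth {α : Type} [DecidableEq α] (l : List α)
    (F : (α → Option Bool) → DTree α) (d : ℕ) (hF : ∀ ρ, (F ρ).depth ≤ d) :
    ∀ ρ, (bigNode l ρ F).depth ≤ l.length + d := by
  induction l with
  | nil => intro ρ; simpa [bigNode] using hF ρ
  | cons i l ih =>
    intro ρ
    simp only [bigNode, DTree.depth, List.length_cons]
    have h0 := ih (Function.update ρ i (some false))
    have h1 := ih (Function.update ρ i (some true))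
    omega

def assignAlong {α : Type} [DecidableEq α] (x : α → Bool) :
    List α → (α → Option Bool) → (α → Option Bool)
  | [], ρ => ρ
  | i :: l, ρ => assignAlong x l (Function.update ρ i (some (x i)))

lemma bigNode_eval {α : Type} [DecidableEq α] (x : α → Bool) (l : List α)
    (F : (α → Option Bool) → DTree α) :
    ∀ ρ, (bigNode l ρ F).eval x = (F (assignAlong x l ρ)).eval x := by
  induction l with
  | nil => intro ρ; rfl
  | cons i l ih =>
    intro ρ
    simp only [bigNode, DTree.eval, assignAlong]
    by_cases h : x i
    · rw [if_pos h, ih, h]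
    · rw [if_neg h, ih, (Bool.not_eq_true _).mp h]

lemma assignAlong_not_mem {α : Type} [DecidableEq α] (x : α → Bool) (l : List α) {i : α} :
    ∀ ρ, i ∉ l → assignAlong x l ρ i = ρ i := by
  induction l with
  | nil => intro ρ _; rfl
  | cons a l ih =>
    intro ρ h
    rw [List.mem_cons] at h
    push_neg at h
    simp only [assignAlong]
    rw [ih _ h.2, Function.update_of_ne h.1]

lemma assignAlong_mem {α : Type} [DecidableEq α] (x : α → Bool) (l : List α) {i : α} :
    ∀ ρ, i ∈ l → assignAlong x l ρ i = some (x i) := by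
  induction l with
  | nil => simp
  | cons a l ih =>
    intro ρ h
    by_cases hil : i ∈ l
    · simp only [assignAlong]; exact ih _ hil
    · have hia : i = a := by
        rcases List.mem_cons.mp h with h' | h'
        · exact h'
        · exact absurd h' hil
      subst hia
      simp only [assignAlong]
      rw [assignAlong_not_mem x l _ hil, Function.update_self]

lemma zero_not_mem_RSet {f : (ι → Bool) → Bool} {x₀ x₁ : ι → Bool}
    (h : f x₀ ≠ f x₁) : 0 ∉ RSet f := by
  rintro ⟨μ, hdepth, hsucc⟩
  have hA := hsucc x₀
  have hB := hsucc x₁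
  have hpt : ∀ T : DTree ι, (if T.eval x₀ = f x₀ then μ T else 0)
      + (if T.eval x₁ = f x₁ then μ T else 0) ≤ μ T := by
    intro T
    by_cases hT : μ T = 0
    · simp [hT]
    · have hTs : T ∈ μ.support := by simpa [PMF.mem_support_iff] using hT
      have hd0 : T.depth ≤ 0 := hdepth T hTs
      obtain ⟨b, rfl⟩ : ∃ b, T = DTree.leaf b := by
        cases T with
        | leaf b => exact ⟨b, rfl⟩
        | node i t0 t1 => simp [DTree.depth] at hd0
      by_cases hc : b = f x₀
      · have hc' : ¬ (b = f x₁) := by rw [hc]; exact h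
        show (if b = f x₀ then μ (DTree.leaf b) else 0) + (if b = f x₁ then μ (DTree.leaf b) else 0) ≤ μ (DTree.leaf b)
        rw [if_pos hc, if_neg hc', add_zero]
      · show (if b = f x₀ then μ (DTree.leaf b) else 0) + (if b = f x₁ then μ (DTree.leaf b) else 0) ≤ μ (DTree.leaf b)
        rw [if_neg hc, zero_add]
        split <;> simp
  have hsum : (2/3 : ℝ≥0∞) + 2/3 ≤ 1 := by
    calc (2/3 : ℝ≥0∞) + 2/3
        ≤ (∑' T : DTree ι, if T.eval x₀ = f x₀ then μ T else 0)
          + (∑' T : DTree ι, if T.eval x₁ = f x₁ then μ T else 0) := add_le_add hA hB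
      _ = ∑' T : DTree ι, ((if T.eval x₀ = f x₀ then μ T else 0)
          + (if T.eval x₁ = f x₁ then μ T else 0)) := (ENNReal.tsum_add).symm
      _ ≤ ∑' T : DTree ι, μ T := ENNReal.tsum_le_tsum hpt
      _ = 1 := μ.tsum_coe
  rw [ENNReal.div_add_div_same] at hsum
  rw [ENNReal.div_le_iff (by norm_num) (by norm_num)] at hsum
  norm_num at hsum

end Aux3
section Aux4
set_option linter.unusedSectionVars false
variable {ι : Type} [Fintype ι] [DecidableEq ι]

lemma SensFamily.snoc {f : (ι → Bool) → Bool} {x : ι → Bool} {r : ℕ}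
    {C : Fin r → Finset ι} (h : SensFamily f x r C) {D : Finset ι}
    (hD : f (flipSet x D) ≠ f x) (hdisj : ∀ j, Disjoint (C j) D) :
    SensFamily f x (r+1) (Fin.snoc C D) := by
  constructor
  · intro j
    induction j using Fin.lastCases with
    | last => simpa [Fin.snoc_last] using hD
    | cast j => simpa [Fin.snoc_castSucc] using h.1 j
  · intro j₁ j₂ hne
    induction j₁ using Fin.lastCases with
    | last =>
      induction j₂ using Fin.lastCases with
      | last => exact absurd rfl hne
      | cast j₂ => simpa [Fin.snoc_last, Fin.snoc_castSucc] using (hdisj j₂).symm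
    | cast j₁ =>
      induction j₂ using Fin.lastCases with
      | last => simpa [Fin.snoc_last, Fin.snoc_castSucc] using hdisj j₁
      | cast j₂ =>
        have hne' : j₁ ≠ j₂ := fun hh => hne (by rw [hh])
        simpa [Fin.snoc_castSucc] using h.2 j₁ j₂ hne'

lemma exists_minimal_block {f : (ι → Bool) → Bool} {x : ι → Bool} (B : Finset ι)
    (h : f (flipSet x B) ≠ f x) :
    ∃ B', B' ⊆ B ∧ f (flipSet x B') ≠ f x ∧ ∀ C ⊂ B', f (flipSet x C) = f x := by
  induction B using Finset.strongInductionOn with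
  | _ B ih =>
    by_cases hmin : ∀ C ⊂ B, f (flipSet x C) = f x
    · exact ⟨B, Finset.Subset.refl B, h, hmin⟩
    · push_neg at hmin
      obtain ⟨C, hCB, hC⟩ := hmin
      obtain ⟨B', hsub, h1, h2⟩ := ih C hCB hC
      exact ⟨B', hsub.trans hCB.subset, h1, h2⟩

lemma flip_flip_erase {x : ι → Bool} {B : Finset ι} {i : ι} (h : i ∈ B) :
    flipSet (flipSet x B) {i} = flipSet x (B.erase i) := by
  funext j
  by_cases hji : j = i
  · subst hji
    rw [flipSet_of_mem _ _ (Finset.mem_singleton_self j),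
      flipSet_of_not_mem _ _ (Finset.notMem_erase j B), flipSet_of_mem _ _ h, Bool.not_not]
  · rw [flipSet_of_not_mem _ _ (by simp [hji] : j ∉ ({i} : Finset ι))]
    by_cases hjB : j ∈ B
    · rw [flipSet_of_mem _ _ hjB, flipSet_of_mem _ _ (Finset.mem_erase.mpr ⟨hji, hjB⟩)]
    · rw [flipSet_of_not_mem _ _ hjB,
        flipSet_of_not_mem _ _ (fun hc => hjB (Finset.mem_of_mem_erase hc))]

lemma minimal_block_family {f : (ι → Bool) → Bool} {x : ι → Bool} {B : Finset ι}
    (h : f (flipSet x B) ≠ f x) (hmin : ∀ C ⊂ B, f (flipSet x C) = f x) :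
    SensFamily f (flipSet x B) B.card (fun j => {(B.equivFin.symm j : ι)}) := by
  constructor
  · intro j
    have hmem := (B.equivFin.symm j).2
    rw [flip_flip_erase hmem, hmin _ (Finset.erase_ssubset hmem)]
    exact fun hc => h hc.symm
  · intro j₁ j₂ hne
    rw [Finset.disjoint_singleton]
    exact fun hc => hne (B.equivFin.symm.injective (Subtype.ext hc))

lemma minimal_block_card_le {f : (ι → Bool) → Bool} {x : ι → Bool} {B : Finset ι}
    (h : f (flipSet x B) ≠ f x) (hmin : ∀ C ⊂ B, f (flipSet x C) = f x) :
    B.card ≤ blockSens f :=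
  calc B.card ≤ bsAt f (flipSet x B) := (minimal_block_family h hmin).le_bsAt
    _ ≤ blockSens f := bsAt_le_blockSens f _

lemma certAt_exists (f : (ι → Bool) → Bool) (x : ι → Bool) :
    ∃ S : Finset ι, S.card = certAt f x ∧ IsCert f x S := by
  have hne : {c | ∃ S : Finset ι, S.card = c ∧ IsCert f x S}.Nonempty :=
    ⟨Finset.univ.card, Finset.univ, rfl, fun y hy => by
      have hyx : y = x := funext fun i => hy i (Finset.mem_univ i)
      rw [hyx]⟩
  obtain ⟨S, h1, h2⟩ := Nat.sInf_mem hne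
  exact ⟨S, h1, h2⟩

lemma certAt_le_card {f : (ι → Bool) → Bool} {x : ι → Bool} {S : Finset ι}
    (h : IsCert f x S) : certAt f x ≤ S.card :=
  Nat.sInf_le ⟨S, rfl, h⟩

lemma certAt_le_sq (f : (ι → Bool) → Bool) (x : ι → Bool) :
    certAt f x ≤ blockSens f * blockSens f := by
  obtain ⟨B, hfam⟩ := bsAt_exists f x
  have hmin : ∀ j, ∃ B', B' ⊆ B j ∧ (f (flipSet x B') ≠ f x)
      ∧ ∀ C ⊂ B', f (flipSet x C) = f x :=
    fun j => exists_minimal_block (B j) (hfam.1 j)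
  choose B' hsub hsens hminimal using hmin
  have hfam' : SensFamily f x (bsAt f x) B' :=
    ⟨hsens, fun j₁ j₂ hne =>
      Finset.disjoint_of_subset_left (hsub j₁)
        (Finset.disjoint_of_subset_right (hsub j₂) (hfam.2 j₁ j₂ hne))⟩
  have hcert : IsCert f x (Finset.univ.biUnion fun j => B' j) := by
    intro y hy
    by_contra hne
    have hyD : flipSet x (Finset.univ.filter fun i => ¬ (y i = x i)) = y := by
      funext i
      by_cases hi : y i = x i
      · rw [flipSet_of_not_mem _ _ (by simp [hi]), hi]
      · rw [flipSet_of_mem _ _ (by simp [hi])]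
        cases hxi : x i <;> cases hyi : y i <;> simp_all
    have hdisj : ∀ j, Disjoint (B' j) (Finset.univ.filter fun i => ¬ (y i = x i)) := by
      intro j
      rw [Finset.disjoint_right]
      intro i hiD hiB
      rw [Finset.mem_filter] at hiD
      exact hiD.2 (hy i (Finset.mem_biUnion.mpr ⟨j, Finset.mem_univ j, hiB⟩))
    have hsnoc := hfam'.snoc (D := Finset.univ.filter fun i => ¬ (y i = x i))
      (by rw [hyD]; exact fun hc => hne hc) hdisj
    have := hsnoc.le_bsAt
    omega
  calc certAt f x ≤ (Finset.univ.biUnion fun j => B' j).card := certAt_le_card hcert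
    _ ≤ ∑ j, (B' j).card := Finset.card_biUnion_le
    _ ≤ ∑ _j : Fin (bsAt f x), blockSens f :=
        Finset.sum_le_sum fun j _ => minimal_block_card_le (hsens j) (hminimal j)
    _ = bsAt f x * blockSens f := by
        rw [Finset.sum_const, Finset.card_univ, Fintype.card_fin, smul_eq_mul]
    _ ≤ blockSens f * blockSens f := Nat.mul_le_mul_right _ (bsAt_le_blockSens f x)

end Aux4
section Aux5
set_option linter.unusedSectionVars false
variable {ι : Type} [Fintype ι] [DecidableEq ι]

lemma flipSet_diff (x y : ι → Bool) :
    flipSet x (Finset.univ.filter fun i => ¬ (y i = x i)) = y := by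
  funext i
  by_cases hi : y i = x i
  · rw [flipSet_of_not_mem _ _ (by simp [hi]), hi]
  · rw [flipSet_of_mem _ _ (by simp [hi])]
    cases hxi : x i <;> cases hyi : y i <;> simp_all

lemma one_le_bsAt_of_ne {g : (ι → Bool) → Bool} {x y : ι → Bool} (h : g y ≠ g x) :
    1 ≤ bsAt g x := by
  have hfam : SensFamily g x 1 (fun _ => Finset.univ.filter fun i => ¬ (y i = x i)) := by
    refine ⟨fun _ => ?_, fun j₁ j₂ hne => absurd (Subsingleton.elim j₁ j₂) hne⟩
    rw [flipSet_diff]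
    exact h
  exact hfam.le_bsAt

lemma certAt_restrict_le (g : (ι → Bool) → Bool) (ρ : ι → Option Bool) (x' : ι → Bool) :
    certAt (restrictBF g ρ) x' ≤ certAt g (fun i => (ρ i).getD (x' i)) := by
  obtain ⟨S₁, hcard, hcert⟩ := certAt_exists g (fun i => (ρ i).getD (x' i))
  have hC : IsCert (restrictBF g ρ) x' (S₁.filter fun i => ρ i = none) := by
    intro y hy
    refine hcert _ fun i hi => ?_
    cases hρ : ρ i with
    | some b => simp [hρ]
    | none =>
      have hyi : y i = x' i := hy i (Finset.mem_filter.mpr ⟨hi, hρ⟩)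
      simp [hρ, hyi]
  calc certAt (restrictBF g ρ) x' ≤ (S₁.filter fun i => ρ i = none).card := certAt_le_card hC
    _ ≤ S₁.card := Finset.card_filter_le _ _
    _ = _ := hcard

lemma bsAt_restrict_lt {g : (ι → Bool) → Bool} {z : ι → Bool} {S : Finset ι}
    (hz : g z = true) (hS : IsCert g z S) (x : ι → Bool)
    (ρ : ι → Option Bool) (hρ : ∀ i, ρ i = if i ∈ S then some (x i) else none)
    (x' : ι → Bool) (hx' : restrictBF g ρ x' = false) :
    bsAt (restrictBF g ρ) x' + 1 ≤ bsAt g (fun i => (ρ i).getD (x' i)) := by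
  set w : ι → Bool := fun i => (ρ i).getD (x' i) with hw
  have hwS : ∀ i ∈ S, w i = x i := by
    intro i hi; rw [hw]; simp only; rw [hρ i, if_pos hi]; rfl
  have hwS' : ∀ i, i ∉ S → w i = x' i := by
    intro i hi; rw [hw]; simp only; rw [hρ i, if_neg hi]; rfl
  have hgw : g w = false := hx'
  obtain ⟨B, hfam⟩ := bsAt_exists (restrictBF g ρ) x'
  set D : Finset ι := S.filter (fun i => ¬ (w i = z i)) with hD
  have hDsens : g (flipSet w D) ≠ g w := by
    have : g (flipSet w D) = true := by
      refine (hS _ fun i hi => ?_).trans hz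
      by_cases hiD : i ∈ D
      · rw [flipSet_of_mem _ _ hiD]
        have : ¬ (w i = z i) := (Finset.mem_filter.mp hiD).2
        cases hwi : w i <;> cases hzi : z i <;> simp_all
      · rw [flipSet_of_not_mem _ _ hiD]
        by_contra hne
        exact hiD (Finset.mem_filter.mpr ⟨hi, hne⟩)
    rw [this, hgw]
    simp
  have hBsens : ∀ j, g (flipSet w (B j \ S)) ≠ g w := by
    intro j
    have hkey : flipSet w (B j \ S) = fun i => (ρ i).getD (flipSet x' (B j) i) := by
      funext i
      by_cases hiS : i ∈ S
      · rw [flipSet_of_not_mem _ _ (by simp [hiS]), hρ i, if_pos hiS]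
        exact hwS i hiS
      · rw [hρ i, if_neg hiS]
        show flipSet w (B j \ S) i = flipSet x' (B j) i
        by_cases hiB : i ∈ B j
        · rw [flipSet_of_mem _ _ (Finset.mem_sdiff.mpr ⟨hiB, hiS⟩), flipSet_of_mem _ _ hiB,
            hwS' i hiS]
        · rw [flipSet_of_not_mem _ _ (by simp [hiB]), flipSet_of_not_mem _ _ hiB, hwS' i hiS]
    rw [hkey]
    have h1 : g (fun i => (ρ i).getD (flipSet x' (B j) i)) = restrictBF g ρ (flipSet x' (B j)) :=
      rfl
    have h2 : g w = restrictBF g ρ x' := rfl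
    rw [h1, h2]
    exact hfam.1 j
  have hdisj : ∀ j, Disjoint (B j \ S) D :=
    fun j => Finset.disjoint_of_subset_right (Finset.filter_subset _ _) Finset.sdiff_disjoint
  have hsnoc : SensFamily g w (bsAt (restrictBF g ρ) x' + 1) (Fin.snoc (fun j => B j \ S) D) :=
    SensFamily.snoc
      ⟨hBsens, fun j₁ j₂ hne =>
        Finset.disjoint_of_subset_left (Finset.sdiff_subset)
          (Finset.disjoint_of_subset_right (Finset.sdiff_subset) (hfam.2 j₁ j₂ hne))⟩
      hDsens hdisj
  exact hsnoc.le_bsAt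

lemma exists_tree (c : ℕ) : ∀ (k : ℕ) (g : (ι → Bool) → Bool),
    (∀ x, g x = false → bsAt g x ≤ k) → (∀ x, g x = true → certAt g x ≤ c) →
    ∃ T : DTree ι, (∀ x, T.eval x = g x) ∧ T.depth ≤ k * c := by
  intro k
  induction k with
  | zero =>
    intro g hbs hcert
    by_cases h0 : ∃ x, g x = false
    · obtain ⟨x₀, hx₀⟩ := h0
      have hconst : ∀ y, g y = false := by
        intro y
        by_contra hy
        have h1 := one_le_bsAt_of_ne (g := g) (x := x₀) (y := y) (by rw [hx₀]; exact hy)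
        have h2 := hbs x₀ hx₀
        omega
      exact ⟨DTree.leaf false, fun x => (hconst x).symm, Nat.zero_le _⟩
    · push_neg at h0
      refine ⟨DTree.leaf true, fun x => ?_, Nat.zero_le _⟩
      cases hgx : g x with
      | false => exact absurd hgx (h0 x)
      | true => rfl
  | succ k ih =>
    intro g hbs hcert
    by_cases h1 : ∃ z, g z = true
    swap
    · push_neg at h1
      refine ⟨DTree.leaf false, fun x => ?_, Nat.zero_le _⟩
      cases hgx : g x with
      | false => rfl
      | true => exact absurd hgx (h1 x)
    obtain ⟨z, hz⟩ := h1
    obtain ⟨S, hScard, hScert⟩ := certAt_exists g z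
    have hSc : S.card ≤ c := by rw [hScard]; exact hcert z hz
    classical
    set P : (ι → Option Bool) → Prop := fun ρ => ∃ T : DTree ι,
      (∀ y, T.eval y = (restrictBF g ρ) y) ∧ T.depth ≤ k * c with hPdef
    set F : (ι → Option Bool) → DTree ι :=
      fun ρ => if h : P ρ then h.choose else DTree.leaf true with hFdef
    have hFdepth : ∀ ρ, (F ρ).depth ≤ k * c := by
      intro ρ
      by_cases h : P ρ
      · simp only [hFdef, dif_pos h]
        exact h.choose_spec.2
      · simp only [hFdef, dif_neg h]
        exact Nat.zero_le _
    refine ⟨bigNode S.toList (fun _ => none) F, ?_, ?_⟩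
    · intro x
      rw [bigNode_eval]
      set ρx : ι → Option Bool := assignAlong x S.toList (fun _ => none) with hρx
      have hρx_spec : ∀ i, ρx i = if i ∈ S then some (x i) else none := by
        intro i
        by_cases hi : i ∈ S
        · rw [if_pos hi, hρx, assignAlong_mem x _ _ ((Finset.mem_toList).mpr hi)]
        · rw [if_neg hi, hρx, assignAlong_not_mem x _ _ (fun hc => hi (Finset.mem_toList.mp hc))]
      have hP : P ρx := by
        refine ih (restrictBF g ρx) ?_ ?_
        · intro x' hx'
          have hlt := bsAt_restrict_lt hz hScert x ρx hρx_spec x' hx'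
          have hw : g (fun i => (ρx i).getD (x' i)) = false := hx'
          have hle := hbs _ hw
          omega
        · intro x' hx'
          exact (certAt_restrict_le g ρx x').trans (hcert _ hx')
      have heval : (F ρx).eval x = restrictBF g ρx x := by
        simp only [hFdef, dif_pos hP]
        exact hP.choose_spec.1 x
      rw [heval]
      show g (fun i => (ρx i).getD (x i)) = g x
      have hxx : (fun i => (ρx i).getD (x i)) = x := by
        funext i
        rw [hρx_spec i]
        by_cases hi : i ∈ S <;> simp [hi]
      rw [hxx]
    · refine (bigNode_depth S.toList F (k*c) hFdepth _).trans ?_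
      rw [Finset.length_toList]
      rw [Nat.succ_mul]
      omega

end Aux5
section Aux6
set_option linter.unusedSectionVars false
variable {ι : Type} [Fintype ι] [DecidableEq ι]

lemma Rquery_le_cube (f : (ι → Bool) → Bool) :
    Rquery f ≤ blockSens f * (blockSens f * blockSens f) ∧ (RSet f).Nonempty := by
  obtain ⟨T, hT, hdepth⟩ := exists_tree (blockSens f * blockSens f) (blockSens f) f
    (fun x _ => bsAt_le_blockSens f x) (fun x _ => certAt_le_sq f x)
  exact ⟨(Rquery_le_depth hT).trans hdepth, ⟨T.depth, mem_RSet_of_tree hT le_rfl⟩⟩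

lemma SensFamily.le_three_Rquery {f : (ι → Bool) → Bool} {x : ι → Bool} {r : ℕ}
    {B : Fin r → Finset ι} (h : SensFamily f x r B) : r ≤ 3 * Rquery f := by
  have hmem : sInf (RSet f) ∈ RSet f := Nat.sInf_mem (Rquery_le_cube f).2
  have := h.le_three_mul_of_mem hmem
  rwa [← Rquery_eq_sInf] at this

/-- The restriction fixing everything outside `U` to the values of `x`. -/
def fixOutside (x : ι → Bool) (U : Finset ι) : ι → Option Bool :=
  fun i => if i ∈ U then none else some (x i)

lemma unsetCard_fixOutside (x : ι → Bool) (U : Finset ι) :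
    unsetCard (fixOutside x U) = U.card := by
  unfold unsetCard fixOutside
  congr 1
  ext i
  simp only [Finset.mem_filter, Finset.mem_univ, true_and]
  by_cases hi : i ∈ U <;> simp [hi]

lemma restrict_fixOutside_eval {f : (ι → Bool) → Bool} (x : ι → Bool) (U : Finset ι)
    (v : ι → Bool) (hv : ∀ i ∉ U, v i = x i) :
    restrictBF f (fixOutside x U) v = f v := by
  show f _ = f v
  congr 1
  funext i
  by_cases hi : i ∈ U
  · simp [fixOutside, hi]
  · simp [fixOutside, hi, (hv i hi).symm]

lemma SensFamily.restrict {f : (ι → Bool) → Bool} {x₀ x : ι → Bool} {U : Finset ι} {r : ℕ}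
    {B : Fin r → Finset ι} (hfam : SensFamily f x r B) (hB : ∀ j, B j ⊆ U)
    (hx : ∀ i ∉ U, x i = x₀ i) :
    SensFamily (restrictBF f (fixOutside x₀ U)) x r B := by
  constructor
  · intro j
    rw [restrict_fixOutside_eval x₀ U x hx,
      restrict_fixOutside_eval x₀ U _ (fun i hi => by
        rw [flipSet_of_not_mem _ _ (fun hc => hi (hB j hc))]
        exact hx i hi)]
    exact hfam.1 j
  · exact hfam.2

end Aux6
/-- for every `f` there is a restriction with `O(R(f))` unset
variables such that `R(f|_ρ) = Ω(R(f)^{1/3})`. -/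
theorem R_lossy_condensation :
    ∃ c₁ c₂ : ℝ, 0 < c₁ ∧ 0 < c₂ ∧
      ∀ (n : ℕ) (f : (Fin n → Bool) → Bool),
        ∃ ρ : Fin n → Option Bool,
          (unsetCard ρ : ℝ) ≤ c₁ * (Rquery f : ℝ) ∧
          c₂ * (Rquery f : ℝ) ^ ((1 : ℝ) / 3) ≤ (Rquery (restrictBF f ρ) : ℝ) := by
  refine ⟨3, 1/3, by norm_num, by norm_num, ?_⟩
  intro n f
  by_cases hb0 : blockSens f = 0
  · -- `f` is constant
    have hconst : ∀ y x, f y = f x := by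
      intro y x
      by_contra hne
      have h1 := one_le_bsAt_of_ne (g := f) (x := x) (y := y) hne
      have h2 := bsAt_le_blockSens f x
      omega
    have hR0 : Rquery f = 0 := by
      have hle : Rquery f ≤ (DTree.leaf (f (fun _ => false))).depth :=
        Rquery_le_depth (fun x => hconst _ x)
      simpa [DTree.depth] using hle
    refine ⟨fun _ => some false, ?_, ?_⟩
    · have hu : unsetCard (fun _ : Fin n => (some false : Option Bool)) = 0 := by
        unfold unsetCard
        simp
      rw [hu, hR0]
      norm_num
    · rw [hR0]
      push_cast
      rw [Real.zero_rpow (by norm_num), mul_zero]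
      exact Nat.cast_nonneg _
  · have hb1 : 1 ≤ blockSens f := Nat.pos_of_ne_zero hb0
    obtain ⟨x, -, hx⟩ :=
      Finset.exists_mem_eq_sup Finset.univ Finset.univ_nonempty (fun x => bsAt f x)
    -- hx : blockSens f = bsAt f x
    obtain ⟨B, hfam⟩ := bsAt_exists f x
    choose B' hsub hsens hminimal using
      fun j => exists_minimal_block (x := x) (B j) (hfam.1 j)
    have hfam' : SensFamily f x (bsAt f x) B' :=
      ⟨hsens, fun j₁ j₂ hne =>
        Finset.disjoint_of_subset_left (hsub j₁)
          (Finset.disjoint_of_subset_right (hsub j₂) (hfam.2 j₁ j₂ hne))⟩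
    have hrb : bsAt f x = blockSens f := hx.symm
    have hcardle : ∀ j, (B' j).card ≤ blockSens f :=
      fun j => minimal_block_card_le (hsens j) (hminimal j)
    have h3R : blockSens f ≤ 3 * Rquery f := hrb ▸ hfam'.le_three_Rquery
    have hRcube : Rquery f ≤ blockSens f * (blockSens f * blockSens f) := (Rquery_le_cube f).1
    have hR1 : 1 ≤ Rquery f := by
      rcases Nat.eq_zero_or_pos (Rquery f) with h0 | h1
      · exfalso
        have hmem : sInf (RSet f) ∈ RSet f := Nat.sInf_mem (Rquery_le_cube f).2
        rw [← Rquery_eq_sInf, h0] at hmem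
        have hj0 : (0 : ℕ) < bsAt f x := by omega
        exact zero_not_mem_RSet (hsens ⟨0, hj0⟩) hmem
      · exact h1
    have hRr1 : (1 : ℝ) ≤ (Rquery f : ℝ) := by exact_mod_cast hR1
    have hRr0 : (0 : ℝ) < (Rquery f : ℝ) := lt_of_lt_of_le one_pos hRr1
    set Tr : ℝ := (Rquery f : ℝ) ^ ((1 : ℝ)/3) with hTr
    have hTr1 : (1 : ℝ) ≤ Tr := by
      calc (1 : ℝ) = (1 : ℝ) ^ ((1 : ℝ)/3) := (Real.one_rpow _).symm
        _ ≤ Tr := Real.rpow_le_rpow zero_le_one hRr1 (by norm_num)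
    have hTrb : Tr ≤ (blockSens f : ℝ) := by
      have h1 : (Rquery f : ℝ) ≤ ((blockSens f : ℝ)) ^ (3 : ℕ) := by
        have : (Rquery f : ℝ) ≤ ((blockSens f * (blockSens f * blockSens f) : ℕ) : ℝ) := by
          exact_mod_cast hRcube
        calc (Rquery f : ℝ) ≤ _ := this
          _ = ((blockSens f : ℝ)) ^ (3 : ℕ) := by push_cast; ring
      calc Tr ≤ (((blockSens f : ℝ)) ^ (3 : ℕ)) ^ ((1 : ℝ)/3) :=
            Real.rpow_le_rpow (le_of_lt hRr0) h1 (by norm_num)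
        _ = (blockSens f : ℝ) := by
            rw [← Real.rpow_natCast ((blockSens f : ℝ)) 3,
              ← Real.rpow_mul (Nat.cast_nonneg _)]
            norm_num
    have hTrR : Tr ≤ (Rquery f : ℝ) := by
      calc Tr ≤ (Rquery f : ℝ) ^ (1 : ℝ) :=
            Real.rpow_le_rpow_of_exponent_le hRr1 (by norm_num)
        _ = (Rquery f : ℝ) := Real.rpow_one _
    by_cases hbig : ∃ j, Tr ≤ ((B' j).card : ℝ)
    · -- one big minimal block: restrict to it
      obtain ⟨j, hj⟩ := hbig
      refine ⟨fixOutside x (B' j), ?_, ?_⟩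
      · rw [unsetCard_fixOutside]
        have h1 : ((B' j).card : ℝ) ≤ (blockSens f : ℝ) := by exact_mod_cast hcardle j
        have h2 : (blockSens f : ℝ) ≤ 3 * (Rquery f : ℝ) := by exact_mod_cast h3R
        linarith
      · have hfamU :
            SensFamily (restrictBF f (fixOutside x (B' j))) (flipSet x (B' j)) (B' j).card
              (fun j' => {((B' j).equivFin.symm j' : Fin n)}) := by
          refine (minimal_block_family (hsens j) (hminimal j)).restrict ?_ ?_
          · intro j'
            intro i hi
            rw [Finset.mem_singleton] at hi
            rw [hi]
            exact ((B' j).equivFin.symm j').2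
          · intro i hi
            exact flipSet_of_not_mem x (B' j) hi
        have h3 : (B' j).card ≤ 3 * Rquery (restrictBF f (fixOutside x (B' j))) :=
          hfamU.le_three_Rquery
        have h3' : ((B' j).card : ℝ) ≤ 3 * (Rquery (restrictBF f (fixOutside x (B' j))) : ℝ) := by
          exact_mod_cast h3
        linarith
    · -- all blocks are small: take ⌈Tr⌉₊ of them
      push_neg at hbig
      set t : ℕ := ⌈Tr⌉₊ with ht
      have htb : t ≤ bsAt f x := by
        rw [hrb]
        exact Nat.ceil_le.mpr hTrb
      set C : Fin t → Finset (Fin n) := fun j => B' (Fin.castLE htb j) with hC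
      set U : Finset (Fin n) := Finset.univ.biUnion fun j : Fin t => C j with hU
      have hTt : Tr ≤ (t : ℝ) := Nat.le_ceil Tr
      have htT : (t : ℝ) ≤ Tr + 1 := le_of_lt (Nat.ceil_lt_add_one (by positivity))
      refine ⟨fixOutside x U, ?_, ?_⟩
      · rw [unsetCard_fixOutside]
        have hcardU : (U.card : ℝ) ≤ (t : ℝ) * Tr := by
          have hc1 : U.card ≤ ∑ j : Fin t, (C j).card := Finset.card_biUnion_le
          have hc2 : ((∑ j : Fin t, (C j).card : ℕ) : ℝ) = ∑ j : Fin t, ((C j).card : ℝ) := by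
            push_cast
            rfl
          calc (U.card : ℝ) ≤ ((∑ j : Fin t, (C j).card : ℕ) : ℝ) := by exact_mod_cast hc1
            _ = ∑ j : Fin t, ((C j).card : ℝ) := hc2
            _ ≤ ∑ _j : Fin t, Tr := Finset.sum_le_sum fun j _ => le_of_lt (hbig _)
            _ = (t : ℝ) * Tr := by
                rw [Finset.sum_const, Finset.card_univ, Fintype.card_fin, nsmul_eq_mul]
        have hT2 : Tr * Tr ≤ (Rquery f : ℝ) := by
          have hmul : Tr * Tr = (Rquery f : ℝ) ^ ((2 : ℝ)/3) := by
            rw [hTr, ← Real.rpow_add hRr0]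
            norm_num
          rw [hmul]
          calc (Rquery f : ℝ) ^ ((2 : ℝ)/3) ≤ (Rquery f : ℝ) ^ (1 : ℝ) :=
              Real.rpow_le_rpow_of_exponent_le hRr1 (by norm_num)
            _ = (Rquery f : ℝ) := Real.rpow_one _
        nlinarith [hTr1, hRr1]
      · have hfamC : SensFamily f x t C := by
          refine ⟨fun j => hsens _, fun j₁ j₂ hne => hfam'.2 _ _ ?_⟩
          intro hc
          exact hne (Fin.castLE_injective htb hc)
        have hfamCg : SensFamily (restrictBF f (fixOutside x U)) x t C := by
          refine hfamC.restrict ?_ (fun i _ => rfl)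
          intro j
          exact Finset.subset_biUnion_of_mem (fun j => C j) (Finset.mem_univ j)
        have h3 : t ≤ 3 * Rquery (restrictBF f (fixOutside x U)) := hfamCg.le_three_Rquery
        have h3' : (t : ℝ) ≤ 3 * (Rquery (restrictBF f (fixOutside x U)) : ℝ) := by
          exact_mod_cast h3
        linarith
end

section
/- For every Boolean function f: {0,1}^n → {0,1}, there exists a restriction ρ with |ρ^{-1}(*)| = O(λ(f)) such that λ(f|_ρ) = Ω(√(λ(f))), where λ denotes spectral sensitivity (the spectral norm of the adjacency matrix of the sensitivity graph of f). -/
open Finset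

/-- Adjacency matrix of the sensitivity graph of `f`: vertices are the inputs,
with an edge between `x` and `x^i` whenever `f(x) ≠ f(x^i)`. -/
noncomputable def sensMatrix {ι : Type} [Fintype ι] [DecidableEq ι]
    (f : (ι → Bool) → Bool) : Matrix (ι → Bool) (ι → Bool) ℂ :=
  Matrix.of fun x y => if f x ≠ f y ∧ ∃ i : ι, y = flipSet x {i} then (1 : ℂ) else 0

/-- Spectral sensitivity `λ(f)`: the spectral (operator) norm of the adjacency
matrix of the sensitivity graph of `f`. -/
noncomputable def specSens {ι : Type} [Fintype ι] [DecidableEq ι]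
    (f : (ι → Bool) → Bool) : ℝ :=
  ‖Matrix.toEuclideanCLM (𝕜 := ℂ) (sensMatrix f)‖

open Matrix
set_option linter.unusedSectionVars false

section Helpers
variable {ι : Type} [Fintype ι] [DecidableEq ι] (f : (ι → Bool) → Bool)

def sSet (x : ι → Bool) : Finset ι := univ.filter fun i => f (flipSet x {i}) ≠ f x

lemma sensAt_eq (x : ι → Bool) : sensAt f x = (sSet f x).card := rfl

lemma flipSet_single (x : ι → Bool) (i j : ι) :
    flipSet x {i} j = if j = i then !(x j) else x j := by
  simp [flipSet]

lemma flipSet_ne (x : ι → Bool) (i : ι) : flipSet x {i} ≠ x := by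
  intro h
  have := congrFun h i
  simp [flipSet] at this

lemma flipSet_inj (x : ι → Bool) {i j : ι} (h : flipSet x {i} = flipSet x {j}) : i = j := by
  by_contra hne
  have := congrFun h i
  rw [flipSet_single, flipSet_single, if_pos rfl, if_neg hne] at this
  simp at this
end Helpers
set_option linter.unusedSectionVars false
section Helpers2
variable {ι : Type} [Fintype ι] [DecidableEq ι] (f : (ι → Bool) → Bool)

lemma mulVec_sensMatrix (v : (ι → Bool) → ℂ) (x : ι → Bool) :
    (sensMatrix f *ᵥ v) x = ∑ i ∈ sSet f x, v (flipSet x {i}) := by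
  have h1 : (sensMatrix f *ᵥ v) x
      = ∑ y ∈ univ.filter (fun y => f x ≠ f y ∧ ∃ i : ι, y = flipSet x {i}), v y := by
    rw [Matrix.mulVec, dotProduct]
    rw [Finset.sum_filter]
    refine Finset.sum_congr rfl fun y _ => ?_
    by_cases h : f x ≠ f y ∧ ∃ i : ι, y = flipSet x {i} <;> simp [sensMatrix, h]
  have h2 : univ.filter (fun y => f x ≠ f y ∧ ∃ i : ι, y = flipSet x {i})
      = (sSet f x).image (fun i => flipSet x {i}) := by
    ext y
    simp only [Finset.mem_filter, Finset.mem_univ, true_and, Finset.mem_image, sSet]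
    constructor
    · rintro ⟨hne, i, rfl⟩
      exact ⟨i, by simpa using hne.symm, rfl⟩
    · rintro ⟨i, hi, rfl⟩
      exact ⟨by simpa using hi.symm, i, rfl⟩
  rw [h1, h2]
  exact Finset.sum_image fun i _ j _ h => flipSet_inj x h
end Helpers2
section Helpers3
variable {ι : Type} [Fintype ι] [DecidableEq ι] (f : (ι → Bool) → Bool)

lemma flipSet_flipSet (x : ι → Bool) (i : ι) : flipSet (flipSet x {i}) {i} = x := by
  funext j
  by_cases h : j ∈ ({i} : Finset ι) <;> simp [flipSet, h]

lemma mem_sSet_flip {x : ι → Bool} {i : ι} (h : i ∈ sSet f x) :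
    i ∈ sSet f (flipSet x {i}) := by
  simp only [sSet, Finset.mem_filter, Finset.mem_univ, true_and, flipSet_flipSet] at *
  exact h.symm

lemma sum_flip (g : (ι → Bool) → ℝ) :
    ∑ x : ι → Bool, ∑ i ∈ sSet f x, g (flipSet x {i})
      = ∑ x : ι → Bool, (sensAt f x : ℝ) * g x := by
  have h : ∑ x : ι → Bool, ∑ i ∈ sSet f x, g (flipSet x {i})
      = ∑ x : ι → Bool, ∑ i ∈ sSet f x, g x := by
    rw [Finset.sum_sigma' univ (fun x => sSet f x) (fun x i => g (flipSet x {i})),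
        Finset.sum_sigma' univ (fun x => sSet f x) (fun x _ => g x)]
    refine Finset.sum_bij' (fun p _ => (⟨flipSet p.1 {p.2}, p.2⟩ : Σ _ : ι → Bool, ι))
      (fun p _ => (⟨flipSet p.1 {p.2}, p.2⟩ : Σ _ : ι → Bool, ι)) ?_ ?_ ?_ ?_ ?_
    · rintro ⟨x, i⟩ hp
      rw [Finset.mem_sigma] at hp ⊢
      exact ⟨Finset.mem_univ _, mem_sSet_flip f hp.2⟩
    · rintro ⟨x, i⟩ hp
      rw [Finset.mem_sigma] at hp ⊢
      exact ⟨Finset.mem_univ _, mem_sSet_flip f hp.2⟩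
    · rintro ⟨x, i⟩ _; simp [flipSet_flipSet]
    · rintro ⟨x, i⟩ _; simp [flipSet_flipSet]
    · rintro ⟨x, i⟩ _; rfl
  rw [h]
  refine Finset.sum_congr rfl fun x _ => ?_
  rw [Finset.sum_const, nsmul_eq_mul, sensAt_eq]

lemma sensAt_le_sens (x : ι → Bool) : sensAt f x ≤ sens f :=
  Finset.le_sup (Finset.mem_univ x)
end Helpers3
section HelpersA
variable {ι : Type} [Fintype ι] [DecidableEq ι] (f : (ι → Bool) → Bool)

lemma key_bound (v : (ι → Bool) → ℂ) :
    ∑ x : ι → Bool, ‖(sensMatrix f *ᵥ v) x‖ ^ 2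
      ≤ (sens f : ℝ) ^ 2 * ∑ x : ι → Bool, ‖v x‖ ^ 2 := by
  have step1 : ∀ x : ι → Bool, ‖(sensMatrix f *ᵥ v) x‖ ^ 2
      ≤ (sens f : ℝ) * ∑ i ∈ sSet f x, ‖v (flipSet x {i})‖ ^ 2 := by
    intro x
    rw [mulVec_sensMatrix]
    calc ‖∑ i ∈ sSet f x, v (flipSet x {i})‖ ^ 2
        ≤ (∑ i ∈ sSet f x, ‖v (flipSet x {i})‖) ^ 2 :=
          pow_le_pow_left₀ (norm_nonneg _) (norm_sum_le _ _) 2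
      _ ≤ ((sSet f x).card : ℝ) * ∑ i ∈ sSet f x, ‖v (flipSet x {i})‖ ^ 2 :=
          sq_sum_le_card_mul_sum_sq
      _ ≤ (sens f : ℝ) * ∑ i ∈ sSet f x, ‖v (flipSet x {i})‖ ^ 2 := by
          have : ((sSet f x).card : ℝ) ≤ (sens f : ℝ) := by
            exact_mod_cast (sensAt_eq f x ▸ sensAt_le_sens f x)
          exact mul_le_mul_of_nonneg_right this (by positivity)
  calc ∑ x : ι → Bool, ‖(sensMatrix f *ᵥ v) x‖ ^ 2
      ≤ ∑ x : ι → Bool, (sens f : ℝ) * ∑ i ∈ sSet f x, ‖v (flipSet x {i})‖ ^ 2 :=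
        Finset.sum_le_sum fun x _ => step1 x
    _ = (sens f : ℝ) * ∑ x : ι → Bool, ∑ i ∈ sSet f x, ‖v (flipSet x {i})‖ ^ 2 := by
        rw [Finset.mul_sum]
    _ = (sens f : ℝ) * ∑ x : ι → Bool, (sensAt f x : ℝ) * ‖v x‖ ^ 2 := by
        rw [sum_flip f (fun y => ‖v y‖ ^ 2)]
    _ ≤ (sens f : ℝ) * ∑ x : ι → Bool, (sens f : ℝ) * ‖v x‖ ^ 2 := by
        gcongr with x hx
        · exact_mod_cast sensAt_le_sens f x
    _ = (sens f : ℝ) ^ 2 * ∑ x : ι → Bool, ‖v x‖ ^ 2 := by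
        rw [← Finset.mul_sum]; ring

lemma specSens_le_sens : specSens f ≤ (sens f : ℝ) := by
  refine ContinuousLinearMap.opNorm_le_bound _ (Nat.cast_nonneg _) fun v => ?_
  set w : (ι → Bool) → ℂ := WithLp.equiv 2 _ v with hw
  have hv : v = (WithLp.equiv 2 ((ι → Bool) → ℂ)).symm w := rfl
  rw [hv, show Matrix.toEuclideanCLM (𝕜 := ℂ) (sensMatrix f) ((WithLp.equiv 2 ((ι → Bool) → ℂ)).symm w) = (WithLp.equiv 2 ((ι → Bool) → ℂ)).symm (sensMatrix f *ᵥ w) from rfl]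
  rw [EuclideanSpace.norm_eq, EuclideanSpace.norm_eq]
  simp only [WithLp.equiv_symm_apply, PiLp.toLp_apply]
  have h := key_bound f w
  calc Real.sqrt (∑ x : ι → Bool, ‖(sensMatrix f *ᵥ w) x‖ ^ 2)
      ≤ Real.sqrt ((sens f : ℝ) ^ 2 * ∑ x : ι → Bool, ‖w x‖ ^ 2) := Real.sqrt_le_sqrt h
    _ = (sens f : ℝ) * Real.sqrt (∑ x : ι → Bool, ‖w x‖ ^ 2) := by
        rw [Real.sqrt_mul (by positivity), Real.sqrt_sq (by positivity)]
end HelpersA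
section HelpersB
variable {ι : Type} [Fintype ι] [DecidableEq ι] (f : (ι → Bool) → Bool)

lemma coord_le_norm (w : EuclideanSpace ℂ (ι → Bool)) (x : ι → Bool) :
    ‖w x‖ ≤ ‖w‖ := by
  rw [EuclideanSpace.norm_eq]
  rw [show ‖w x‖ = Real.sqrt (‖w x‖ ^ 2) from (Real.sqrt_sq (norm_nonneg _)).symm]
  apply Real.sqrt_le_sqrt
  exact Finset.single_le_sum (f := fun y => ‖w y‖ ^ 2) (fun y _ => by positivity)
    (Finset.mem_univ x)

lemma sqrt_sensAt_le_specSens (x : ι → Bool) :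
    Real.sqrt (sensAt f x) ≤ specSens f := by
  rcases Nat.eq_zero_or_pos (sensAt f x) with h0 | hpos
  · rw [h0]; simp only [Nat.cast_zero, Real.sqrt_zero]; exact norm_nonneg _
  set d := sensAt f x with hd
  set nbrs : Finset (ι → Bool) := (sSet f x).image (fun i => flipSet x {i}) with hnbrs
  have hcard : nbrs.card = d := by
    rw [hnbrs, Finset.card_image_of_injOn (fun i _ j _ h => flipSet_inj x h)]
    rw [hd, sensAt_eq]
  set w : (ι → Bool) → ℂ := fun y => if y ∈ nbrs then 1 else 0 with hwdef
  set v : EuclideanSpace ℂ (ι → Bool) := (WithLp.equiv 2 ((ι → Bool) → ℂ)).symm w with hv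
  have hAv : (sensMatrix f *ᵥ w) x = (d : ℂ) := by
    rw [mulVec_sensMatrix]
    rw [Finset.sum_congr rfl (fun i hi => if_pos (Finset.mem_image_of_mem _ hi))]
    rw [Finset.sum_const, hd, sensAt_eq]
    simp
  have hnv : ‖v‖ = Real.sqrt d := by
    rw [hv, EuclideanSpace.norm_eq]
    congr 1
    simp only [WithLp.equiv_symm_apply, PiLp.toLp_apply]
    have : ∀ y : ι → Bool, ‖w y‖ ^ 2 = if y ∈ nbrs then (1 : ℝ) else 0 := by
      intro y
      rw [hwdef]
      by_cases h : y ∈ nbrs <;> simp [h]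
    rw [Finset.sum_congr rfl fun y _ => this y, Finset.sum_ite_mem,
      Finset.univ_inter, Finset.sum_const, hcard]
    simp
  have hTv : (d : ℝ) ≤ ‖Matrix.toEuclideanCLM (𝕜 := ℂ) (sensMatrix f) v‖ := by
    have := coord_le_norm (Matrix.toEuclideanCLM (𝕜 := ℂ) (sensMatrix f) v) x
    rw [hv, show Matrix.toEuclideanCLM (𝕜 := ℂ) (sensMatrix f) ((WithLp.equiv 2 ((ι → Bool) → ℂ)).symm w) = (WithLp.equiv 2 ((ι → Bool) → ℂ)).symm (sensMatrix f *ᵥ w) from rfl] at this ⊢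
    calc (d : ℝ) = ‖((d : ℂ))‖ := by simp
      _ = ‖((WithLp.equiv 2 ((ι → Bool) → ℂ)).symm (sensMatrix f *ᵥ w)) x‖ := by
          rw [WithLp.equiv_symm_apply, PiLp.toLp_apply, hAv]
      _ ≤ _ := this
  have hle : (d : ℝ) ≤ specSens f * Real.sqrt d := by
    calc (d : ℝ) ≤ ‖Matrix.toEuclideanCLM (𝕜 := ℂ) (sensMatrix f) v‖ := hTv
      _ ≤ specSens f * ‖v‖ := ContinuousLinearMap.le_opNorm _ _
      _ = specSens f * Real.sqrt d := by rw [hnv]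
  have hsq : (0 : ℝ) < Real.sqrt d := Real.sqrt_pos.mpr (by exact_mod_cast hpos)
  have : Real.sqrt d * Real.sqrt d ≤ specSens f * Real.sqrt d := by
    rw [Real.mul_self_sqrt (Nat.cast_nonneg _)]; exact hle
  exact le_of_mul_le_mul_right this hsq
end HelpersB
section HelpersC
variable {ι : Type} [Fintype ι] [DecidableEq ι] (f : (ι → Bool) → Bool)

lemma sensMatrix_zero (h : sens f = 0) : sensMatrix f = 0 := by
  ext x y
  simp only [sensMatrix, Matrix.of_apply, Matrix.zero_apply, ite_eq_right_iff]
  rintro ⟨hne, i, rfl⟩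
  have hi : i ∈ sSet f x := by
    simp only [sSet, Finset.mem_filter, Finset.mem_univ, true_and]
    exact hne.symm
  have : sensAt f x = 0 := Nat.le_zero.mp (h ▸ sensAt_le_sens f x)
  rw [sensAt_eq, Finset.card_eq_zero] at this
  simp [this] at hi

lemma specSens_zero (h : sens f = 0) : specSens f = 0 := by
  rw [specSens, sensMatrix_zero f h, map_zero, norm_zero]

lemma restrict_lemma (x : ι → Bool) (T : Finset ι) (hT : T ⊆ sSet f x) :
    unsetCard (fun i => if i ∈ T then none else some (x i)) = T.card ∧
    T.card ≤ sensAt (restrictBF f (fun i => if i ∈ T then none else some (x i))) x := by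
  set ρ : ι → Option Bool := fun i => if i ∈ T then none else some (x i) with hρ
  constructor
  · rw [unsetCard]
    congr 1
    ext i
    by_cases h : i ∈ T <;> simp [hρ, h]
  · set g := restrictBF f ρ with hg
    have hgen : ∀ y : ι → Bool, g y = f (fun i => if i ∈ T then y i else x i) := by
      intro y
      rw [hg, restrictBF]
      congr 1
      funext i
      by_cases h : i ∈ T <;> simp [hρ, h]
    have hsub : T ⊆ sSet g x := by
      intro i hi
      simp only [sSet, Finset.mem_filter, Finset.mem_univ, true_and]
      have h1 : g x = f x := by
        rw [hgen]; congr 1; funext j; by_cases h : j ∈ T <;> simp [h]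
      have h2 : g (flipSet x {i}) = f (flipSet x {i}) := by
        rw [hgen]
        congr 1
        funext j
        by_cases h : j ∈ T
        · simp [h]
        · have : j ≠ i := fun hji => h (hji ▸ hi)
          simp [h, flipSet_single, this]
      rw [h1, h2]
      have := hT hi
      simpa [sSet] using this
    rw [sensAt_eq]
    exact Finset.card_le_card hsub
end HelpersC

/-- for every `f` there is a restriction with `O(λ(f))` unset
variables such that `λ(f|_ρ) = Ω(√(λ(f)))`. -/
theorem specSens_lossy_condensation :
    ∃ c₁ c₂ : ℝ, 0 < c₁ ∧ 0 < c₂ ∧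
      ∀ (n : ℕ) (f : (Fin n → Bool) → Bool),
        ∃ ρ : Fin n → Option Bool,
          (unsetCard ρ : ℝ) ≤ c₁ * specSens f ∧
          c₂ * Real.sqrt (specSens f) ≤ specSens (restrictBF f ρ) := by
  refine ⟨2, 1, by norm_num, by norm_num, fun n f => ?_⟩
  by_cases hs : sens f = 0
  · refine ⟨fun _ => some false, ?_, ?_⟩
    · have h1 : unsetCard (fun _ : Fin n => some false) = 0 := by
        rw [unsetCard]
        simp
      rw [h1, specSens_zero f hs]
      norm_num
    · rw [specSens_zero f hs, Real.sqrt_zero, mul_zero]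
      exact norm_nonneg _
  · have hs1 : 1 ≤ sens f := Nat.one_le_iff_ne_zero.mpr hs
    obtain ⟨x₀, -, hx₀⟩ := Finset.exists_mem_eq_sup (Finset.univ : Finset (Fin n → Bool))
      Finset.univ_nonempty (fun x => sensAt f x)
    have hx₀' : sensAt f x₀ = sens f := hx₀.symm
    have hls : specSens f ≤ (sens f : ℝ) := specSens_le_sens f
    have hl1 : (1 : ℝ) ≤ specSens f := by
      calc (1 : ℝ) = Real.sqrt 1 := Real.sqrt_one.symm
        _ ≤ Real.sqrt (sensAt f x₀) := Real.sqrt_le_sqrt (by exact_mod_cast hx₀' ▸ hs1)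
        _ ≤ specSens f := sqrt_sensAt_le_specSens f x₀
    set k := ⌈specSens f⌉₊ with hk
    have hk_le : k ≤ sens f := Nat.ceil_le.mpr hls
    have hk_card : k ≤ (sSet f x₀).card := by
      rw [← sensAt_eq, hx₀']; exact hk_le
    obtain ⟨T, hTsub, hTcard⟩ := Finset.exists_subset_card_eq hk_card
    obtain ⟨hunset, hsens⟩ := restrict_lemma f x₀ T hTsub
    refine ⟨fun i => if i ∈ T then none else some (x₀ i), ?_, ?_⟩
    · rw [hunset, hTcard]
      calc (k : ℝ) ≤ specSens f + 1 := le_of_lt (Nat.ceil_lt_add_one (le_trans zero_le_one hl1))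
        _ ≤ 2 * specSens f := by linarith
    · rw [one_mul]
      calc Real.sqrt (specSens f) ≤ Real.sqrt k := Real.sqrt_le_sqrt (Nat.le_ceil _)
        _ ≤ Real.sqrt (sensAt (restrictBF f (fun i => if i ∈ T then none else some (x₀ i))) x₀) := by
            apply Real.sqrt_le_sqrt
            exact_mod_cast hTcard ▸ hsens
        _ ≤ specSens (restrictBF f (fun i => if i ∈ T then none else some (x₀ i))) :=
            sqrt_sensAt_le_specSens _ x₀
end
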